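/- Fix a positive integer n and set s = ⌊√n⌋. For d ≼₁ n define the gap G(d,n) = d − d⁻, where d⁻ is the largest floor quotient of n strictly smaller than d (with the convention d⁻ = 0 when d = 1), and define the cutting multiplicity K(d,n) = |{k ∈ ℕ⁺ : ⌊n/k⌋ = d}|. Then: (a) for every d ≼₁ n, G(⌊n/d⌋, n) = K(d,n) and K(⌊n/d⌋, n) = G(d,n); (b) for every d with 1 ≤ d ≤ s, G(d,n) = 1 and K(d,n) = ⌊n/d⌋ − ⌊n/(d+1)⌋. -/
import Mathlib


/-- `d` is a floor quotient of `n`: `d = ⌊n/k⌋` for some positive integer `k`. -/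
def FloorQuotient (d n : ℕ) : Prop := ∃ k : ℕ, 0 < k ∧ d = n / k

private lemma fq_mem_iff {n d k : ℕ} (hd : 0 < d) :
    (0 < k ∧ n / k = d) ↔ (n / (d + 1) < k ∧ k ≤ n / d) := by
  constructor
  · rintro ⟨hk, h⟩
    refine ⟨?_, ?_⟩
    · by_contra hle
      push_neg at hle
      have : k * (d + 1) ≤ n := (Nat.le_div_iff_mul_le (by omega)).1 hle
      have : d + 1 ≤ n / k := (Nat.le_div_iff_mul_le hk).2 (by linarith [Nat.mul_comm k (d+1)])
      omega
    · have : d * k ≤ n := (Nat.le_div_iff_mul_le hk).1 (le_of_eq h.symm)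
      exact (Nat.le_div_iff_mul_le hd).2 (by linarith [Nat.mul_comm d k])
  · rintro ⟨h1, h2⟩
    have hk : 0 < k := lt_of_le_of_lt (Nat.zero_le _) h1
    refine ⟨hk, le_antisymm ?_ ?_⟩
    · by_contra hlt
      push_neg at hlt
      have : d + 1 ≤ n / k := hlt
      have : (d + 1) * k ≤ n := (Nat.le_div_iff_mul_le hk).1 this
      have : k ≤ n / (d + 1) := (Nat.le_div_iff_mul_le (by omega)).2 (by linarith [Nat.mul_comm k (d+1)])
      omega
    · have : k * d ≤ n := (Nat.le_div_iff_mul_le hd).1 h2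
      exact (Nat.le_div_iff_mul_le hk).2 (by linarith [Nat.mul_comm d k])

private lemma K_eq (n d : ℕ) (hd : 0 < d) :
    {k : ℕ | 0 < k ∧ n / k = d}.ncard = n / d - n / (d + 1) := by
  have hset : {k : ℕ | 0 < k ∧ n / k = d} = ↑(Finset.Ioc (n / (d + 1)) (n / d)) := by
    ext k
    simp only [Set.mem_setOf_eq, Finset.coe_Ioc, Set.mem_Ioc]
    exact fq_mem_iff hd
  rw [hset, Set.ncard_coe_finset, Nat.card_Ioc]

private lemma fq_inv {n d : ℕ} (hd : 0 < d) (h : FloorQuotient d n) :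
    n / (n / d) = d := by
  obtain ⟨k, hk, hdk⟩ := h
  have hmem := (fq_mem_iff hd).1 ⟨hk, hdk.symm⟩
  have hq0 : 0 < n / d := lt_of_lt_of_le hk hmem.2
  refine le_antisymm ?_ ?_
  · calc n / (n / d) ≤ n / k := Nat.div_le_div_left hmem.2 hk
    _ = d := hdk.symm
  · exact (Nat.le_div_iff_mul_le hq0).2 (by rw [Nat.mul_comm]; exact Nat.div_mul_le_self n d)

private lemma fq_sqrt {n d : ℕ} (hd : 0 < d) (hs : d ≤ Nat.sqrt n) :
    n / (n / d) = d := by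
  have hdd : d * d ≤ n := Nat.le_sqrt.1 hs
  have hdn : d ≤ n := le_trans (Nat.le_mul_of_pos_left d hd) hdd
  have hq : d ≤ n / d := (Nat.le_div_iff_mul_le hd).2 hdd
  have hq0 : 0 < n / d := lt_of_lt_of_le hd hq
  refine le_antisymm ?_ ?_
  · have hlt : n / (n / d) < d + 1 := by
      rw [Nat.div_lt_iff_lt_mul hq0]
      have h1 := Nat.div_add_mod n d
      have h2 : n % d < d := Nat.mod_lt n hd
      have h3 : (d + 1) * (n / d) = d * (n / d) + n / d := by ring
      omega
    omega
  · exact (Nat.le_div_iff_mul_le hq0).2 (by rw [Nat.mul_comm]; exact Nat.div_mul_le_self n d)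

private lemma sSup_eq {n d : ℕ} (hn : 0 < n) (hd : 0 < d) (h : FloorQuotient d n) :
    sSup {e : ℕ | 0 < e ∧ FloorQuotient e n ∧ e < d} = n / (n / d + 1) := by
  have hdn : d ≤ n := by
    obtain ⟨k, hk, hdk⟩ := h
    rw [hdk]; exact Nat.div_le_self n k
  have hinv := fq_inv hd h
  have hq0 : 0 < n / d := Nat.div_pos hdn hd
  rcases Nat.lt_or_ge d 2 with h2 | h2
  · -- d = 1
    have hd1 : d = 1 := by omega
    subst hd1
    have hset : {e : ℕ | 0 < e ∧ FloorQuotient e n ∧ e < 1} = ∅ := by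
      ext e; simp only [Set.mem_setOf_eq, Set.mem_empty_iff_false, iff_false]
      rintro ⟨he, _, hlt⟩; omega
    rw [hset, csSup_empty, Nat.div_one]
    exact (Nat.div_eq_of_lt (by omega)).symm
  · -- d ≥ 2
    have hub : ∀ e ∈ {e : ℕ | 0 < e ∧ FloorQuotient e n ∧ e < d}, e ≤ n / (n / d + 1) := by
      rintro e ⟨he, ⟨j, hj, rfl⟩, hlt⟩
      have hjq : n / d < j := by
        by_contra hle
        push_neg at hle
        have : n / (n / d) ≤ n / j := Nat.div_le_div_left hle hj
        omega
      exact Nat.div_le_div_left hjq (by omega)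
    have hone : (1 : ℕ) ∈ {e : ℕ | 0 < e ∧ FloorQuotient e n ∧ e < d} :=
      ⟨one_pos, ⟨n, hn, (Nat.div_self hn).symm⟩, h2⟩
    have hmpos : 0 < n / (n / d + 1) := lt_of_lt_of_le one_pos (hub 1 hone)
    have hmlt : n / (n / d + 1) < d := by
      rw [Nat.div_lt_iff_lt_mul (by omega)]
      have h1 := Nat.div_add_mod n d
      have h2' : n % d < d := Nat.mod_lt n hd
      have h3 : d * (n / d + 1) = d * (n / d) + d := by ring
      omega
    have hg : IsGreatest {e : ℕ | 0 < e ∧ FloorQuotient e n ∧ e < d} (n / (n / d + 1)) :=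
      ⟨⟨hmpos, ⟨n / d + 1, by omega, rfl⟩, hmlt⟩, hub⟩
    exact hg.csSup_eq

theorem gaps_and_multiplicities_interchange (n : ℕ) (hn : 0 < n) :
    -- the gap `G(d,n) = d - d⁻`, where `d⁻` is the largest floor quotient of `n`
    -- strictly smaller than `d` (`sSup ∅ = 0` in `ℕ` gives the convention `1⁻ = 0`)
    let G : ℕ → ℕ := fun d => d - sSup {e : ℕ | 0 < e ∧ FloorQuotient e n ∧ e < d}
    -- the cutting multiplicity `K(d,n) = #{k ∈ ℕ⁺ : ⌊n/k⌋ = d}`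
    let K : ℕ → ℕ := fun d => {k : ℕ | 0 < k ∧ n / k = d}.ncard
    (∀ d : ℕ, 0 < d → FloorQuotient d n → G (n / d) = K d ∧ K (n / d) = G d) ∧
    (∀ d : ℕ, 1 ≤ d → d ≤ Nat.sqrt n →
      G d = 1 ∧ K d = n / d - n / (d + 1)) := by
  intro G K
  constructor
  · intro d hd hfq
    have hdn : d ≤ n := by
      obtain ⟨k, hk, hdk⟩ := hfq
      rw [hdk]; exact Nat.div_le_self n k
    have hq0 : 0 < n / d := Nat.div_pos hdn hd
    have hfq2 : FloorQuotient (n / d) n := ⟨d, hd, rfl⟩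
    have hinv := fq_inv hd hfq
    constructor
    · show n / d - sSup _ = Set.ncard _
      rw [sSup_eq hn hq0 hfq2, hinv, K_eq n d hd]
    · show Set.ncard _ = d - sSup _
      rw [K_eq n (n / d) hq0, hinv, sSup_eq hn hd hfq]
  · intro d h1 hs
    have hd : 0 < d := h1
    have hinv := fq_sqrt hd hs
    have hdd : d * d ≤ n := Nat.le_sqrt.1 hs
    have hdn : d ≤ n := le_trans (Nat.le_mul_of_pos_left d hd) hdd
    have hq0 : 0 < n / d := Nat.div_pos hdn hd
    constructor
    · show d - sSup _ = 1
      rcases Nat.lt_or_ge d 2 with h2 | h2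
      · have hd1 : d = 1 := by omega
        subst hd1
        have hset : {e : ℕ | 0 < e ∧ FloorQuotient e n ∧ e < 1} = ∅ := by
          ext e; simp only [Set.mem_setOf_eq, Set.mem_empty_iff_false, iff_false]
          rintro ⟨he, _, hlt⟩; omega
        rw [hset, csSup_empty]
        rfl
      · -- d ≥ 2 : the greatest element is d - 1
        have hd1 : 0 < d - 1 := by omega
        have hfq1 : FloorQuotient (d - 1) n := by
          refine ⟨n / (d - 1), ?_, ?_⟩
          · exact Nat.div_pos (by omega) hd1
          · exact (fq_sqrt hd1 (by omega)).symm
        have hg : IsGreatest {e : ℕ | 0 < e ∧ FloorQuotient e n ∧ e < d} (d - 1) := by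
          refine ⟨⟨hd1, hfq1, by omega⟩, ?_⟩
          rintro e ⟨he, _, hlt⟩; omega
        rw [hg.csSup_eq]
        omega
    · show Set.ncard _ = _
      exact K_eq n d hd
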